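/- Let I be a directed index set and let (M_i)_{i∈I} be an inverse system of finite abelian groups over I (so whenever i refines j there is a transition map M_i → M_j, compatibly with composition, and any two indices admit a common refinement). If the inverse limit of the system is zero, then for every index j ∈ I there exists a refinement i of j such that the transition map M_i → M_j is the zero map. -/

import Mathlib

open CategoryTheory Opposite

/-- Let `I` be a directed index set and `(M_i)` an inverse system of finite
abelian groups over `I` (with transition maps `M_i →+ M_j` whenever `i` refines `j`,
compatible with composition and identities).  If the inverse limit of the system is zero,
then for every `j` there is a refinement `i` of `j` such that the transition map
`M_i →+ M_j` is the zero map. -/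
theorem stmt_12 (I : Type*) [Preorder I] (hdir : ∀ i j : I, ∃ k, i ≤ k ∧ j ≤ k)
    (M : I → Type*) [∀ i, AddCommGroup (M i)] [∀ i, Finite (M i)]
    (f : ∀ {i j : I}, j ≤ i → (M i →+ M j))
    (hid : ∀ i : I, f (le_refl i) = AddMonoidHom.id (M i))
    (hcomp : ∀ {i j k : I} (hkj : k ≤ j) (hji : j ≤ i) (x : M i),
      f hkj (f hji x) = f (hkj.trans hji) x)
    (hlim : ∀ x : ∀ i, M i, (∀ (i j : I) (h : j ≤ i), f h (x i) = x j) → ∀ i, x i = 0) :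
    ∀ j : I, ∃ (i : I) (h : j ≤ i), ∀ m : M i, f h m = 0 := by
  intro j
  classical
  -- choose i₀ ≥ j with minimal range cardinality
  have hne : ∃ n : ℕ, ∃ (i : I) (h : j ≤ i), (Set.range (f h)).ncard = n :=
    ⟨_, j, le_refl j, rfl⟩
  obtain ⟨i₀, h₀, hmin⟩ : ∃ (i : I) (h : j ≤ i), ∀ (k : I) (hk : j ≤ k),
      (Set.range (f h)).ncard ≤ (Set.range (f hk)).ncard := by
    obtain ⟨i, h, hcard⟩ := Nat.find_spec hne
    exact ⟨i, h, fun k hk => by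
      rw [hcard]; exact Nat.find_min' hne ⟨k, hk, rfl⟩⟩
  -- the minimal range is contained in every range
  have hsub : ∀ (k : I) (hk : j ≤ k), Set.range (f h₀) ⊆ Set.range (f hk) := by
    intro k hk y hy
    obtain ⟨l, hil, hkl⟩ := hdir i₀ k
    have hjl : j ≤ l := h₀.trans hil
    have hsub1 : Set.range (f hjl) ⊆ Set.range (f h₀) := by
      rintro z ⟨m, rfl⟩
      exact ⟨f hil m, hcomp h₀ hil m⟩
    have heq : Set.range (f hjl) = Set.range (f h₀) :=
      Set.eq_of_subset_of_ncard_le hsub1 (hmin l hjl) (Set.toFinite _)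
    rw [← heq] at hy
    obtain ⟨m, rfl⟩ := hy
    exact ⟨f hkl m, hcomp hk hkl m⟩
  refine ⟨i₀, h₀, fun m => ?_⟩
  set e : M j := f h₀ m with he
  have hemem : e ∈ Set.range (f h₀) := ⟨m, rfl⟩
  -- build a compatible section hitting e, over the cofinal subset {i // j ≤ i}
  haveI : Nonempty {i : I // j ≤ i} := ⟨⟨j, le_refl j⟩⟩
  haveI : IsDirected {i : I // j ≤ i} (· ≤ ·) := ⟨fun a b => by
    obtain ⟨k, hak, hbk⟩ := hdir a.1 b.1
    exact ⟨⟨k, a.2.trans hak⟩, hak, hbk⟩⟩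
  let F : ({i : I // j ≤ i})ᵒᵖ ⥤ Type _ :=
    { obj := fun a => { x : M a.unop.1 // f a.unop.2 x = e }
      map := fun {a b} g => TypeCat.ofHom fun x => ⟨f (leOfHom g.unop) x.1, by
        have : f b.unop.2 (f (leOfHom g.unop) x.1) = f (b.unop.2.trans (leOfHom g.unop)) x.1 :=
          hcomp _ _ _
        exact this.trans x.2⟩
      map_id := fun a => by
        refine ConcreteCategory.hom_ext _ _ fun x => ?_
        apply Subtype.ext
        have : f (le_refl a.unop.1) x.1 = x.1 := by rw [hid]; rfl
        exact this
      map_comp := fun {a b c} g g' => by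
        refine ConcreteCategory.hom_ext _ _ fun x => ?_
        apply Subtype.ext
        exact (hcomp (leOfHom g'.unop) (leOfHom g.unop) x.1).symm }
  haveI : ∀ a, Finite (F.obj a) := fun a => by
    dsimp [F]; infer_instance
  haveI : ∀ a, Nonempty (F.obj a) := fun a => by
    obtain ⟨n, hn⟩ := hsub a.unop.1 a.unop.2 hemem
    exact ⟨⟨n, hn⟩⟩
  obtain ⟨s, hs⟩ := nonempty_sections_of_finite_inverse_system F
  have hsec : ∀ (a b : {i : I // j ≤ i}) (h : a.1 ≤ b.1),
      f h (s (op b)).1 = (s (op a)).1 := by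
    intro a b h
    have := hs ((homOfLE (show a ≤ b from h)).op)
    exact congrArg Subtype.val this
  -- extend to all of I
  choose k hk1 hk2 using fun i => hdir i j
  set x : ∀ i, M i := fun i => f (hk1 i) (s (op ⟨k i, hk2 i⟩)).1 with hx
  have hxl : ∀ (i l : I) (hl : k i ≤ l) (hjl : j ≤ l),
      x i = f ((hk1 i).trans hl) (s (op ⟨l, hjl⟩)).1 := by
    intro i l hl hjl
    have := hsec ⟨k i, hk2 i⟩ ⟨l, hjl⟩ hl
    calc x i = f (hk1 i) (f hl (s (op ⟨l, hjl⟩)).1) := by rw [this]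
      _ = f ((hk1 i).trans hl) (s (op ⟨l, hjl⟩)).1 := hcomp _ _ _
  have hcompat : ∀ (i j' : I) (h : j' ≤ i), f h (x i) = x j' := by
    intro i j' h
    obtain ⟨l, hl1, hl2⟩ := hdir (k i) (k j')
    have hjl : j ≤ l := (hk2 i).trans hl1
    rw [hxl i l hl1 hjl, hcomp, hxl j' l hl2 hjl]
  have hzero := hlim x hcompat j
  have hxj : x j = e := (s (op ⟨k j, hk2 j⟩)).2
  rw [hxj] at hzero
  exact hzero
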